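/- Let N be a C^∞ manifold, p ≥ 1 an integer, and g : N → ℝ^p a C^∞ map. Let q_1, …, q_{p+1} be p+1 distinct critical points of g, and let ρ_1, …, ρ_p : N → ℝ be C^∞ functions such that for all i ∈ {1,…,p}: (i) for each j ∈ {1,…,p}, ρ_i is constant on some open neighborhood of q_j with ρ_i(q_j) = δ_{ij} (the Kronecker delta); and (ii) ρ_i vanishes identically on some open neighborhood of q_{p+1}. Set c_i = g(q_{p+1}) − g(q_i) ∈ ℝ^p and define h : N → ℝ^p by h = g + ∑_{i=1}^p ρ_i · c_i. Then q_1, …, q_{p+1} are all critical points of h and h(q_1) = h(q_2) = ⋯ = h(q_{p+1}) = g(q_{p+1}); that is, h has p+1 distinct critical points that share the same critical value. -/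

import Mathlib

open Metric
open scoped Manifold

/-- Given `p+1` distinct critical points `q₁, …, q_{p+1}` of a
smooth map `g : N → ℝ^p` and bump functions `ρ₁, …, ρ_p` which are locally
constant near every `q_j` with `ρ i (q j) = δ_{ij}` and vanish near `q_{p+1}`,
the map `h = g + ∑ i, ρ i • (g (q_{p+1}) - g (q i))` has `q₁, …, q_{p+1}` as
critical points sharing the common critical value `g (q_{p+1})`. -/
theorem shifted_map_has_common_critical_value
    {E : Type*} [NormedAddCommGroup E] [NormedSpace ℝ E]
    {H : Type*} [TopologicalSpace H] (I : ModelWithCorners ℝ E H) [I.Boundaryless]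
    {N : Type*} [TopologicalSpace N] [ChartedSpace H N] [IsManifold I (⊤ : ℕ∞) N]
    [T2Space N] [SecondCountableTopology N]
    (p : ℕ) (hp : 1 ≤ p)
    (g : N → EuclideanSpace ℝ (Fin p))
    (hg : ContMDiff I 𝓘(ℝ, EuclideanSpace ℝ (Fin p)) (⊤ : ℕ∞) g)
    (q : Fin (p + 1) → N) (hq : Function.Injective q)
    (hcrit : ∀ j, LinearMap.rank
        (mfderiv I 𝓘(ℝ, EuclideanSpace ℝ (Fin p)) g (q j)).toLinearMap
      < (p : Cardinal))
    (ρ : Fin p → N → ℝ)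
    (hρ : ∀ i, ContMDiff I 𝓘(ℝ, ℝ) (⊤ : ℕ∞) (ρ i))
    (hρval : ∀ i j : Fin p, ∀ᶠ x in nhds (q j.castSucc),
      ρ i x = if i = j then 1 else 0)
    (hρlast : ∀ i, ∀ᶠ x in nhds (q (Fin.last p)), ρ i x = 0)
    (h : N → EuclideanSpace ℝ (Fin p))
    (hdef : ∀ x, h x = g x + ∑ i : Fin p,
      ρ i x • (g (q (Fin.last p)) - g (q i.castSucc))) :
    (∀ j, LinearMap.rank
        (mfderiv I 𝓘(ℝ, EuclideanSpace ℝ (Fin p)) h (q j)).toLinearMap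
      < (p : Cardinal)) ∧
    ∀ j, h (q j) = g (q (Fin.last p)) := by
  have main : ∀ j : Fin (p + 1),
      h =ᶠ[nhds (q j)] fun x => g x + (g (q (Fin.last p)) - g (q j)) := by
    intro j
    induction j using Fin.lastCases with
    | last =>
      have : ∀ᶠ x in nhds (q (Fin.last p)), ∀ i : Fin p, ρ i x = 0 :=
        Filter.eventually_all.2 hρlast
      filter_upwards [this] with x hx
      simp [hdef x, hx, sub_self]
    | cast j =>
      have : ∀ᶠ x in nhds (q j.castSucc), ∀ i : Fin p,
          ρ i x = if i = j then 1 else 0 :=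
        Filter.eventually_all.2 fun i => hρval i j
      filter_upwards [this] with x hx
      simp [hdef x, hx, ite_smul]
  have hval : ∀ j, h (q j) = g (q (Fin.last p)) := by
    intro j
    have := (main j).eq_of_nhds
    simpa using this
  refine ⟨fun j => ?_, hval⟩
  have hD : HasMFDerivAt I 𝓘(ℝ, EuclideanSpace ℝ (Fin p))
      (fun x => g x + (g (q (Fin.last p)) - g (q j))) (q j)
      (mfderiv I 𝓘(ℝ, EuclideanSpace ℝ (Fin p)) g (q j)) := by
    have h1 := ((hg (q j)).mdifferentiableAt (by simp)).hasMFDerivAt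
    have h2 : HasMFDerivAt I 𝓘(ℝ, EuclideanSpace ℝ (Fin p))
        (fun _ => g (q (Fin.last p)) - g (q j)) (q j) 0 :=
      hasMFDerivAt_const _ _
    exact (h1.add h2).congr_mfderiv (add_zero _)
  have hDh : mfderiv I 𝓘(ℝ, EuclideanSpace ℝ (Fin p)) h (q j)
      = mfderiv I 𝓘(ℝ, EuclideanSpace ℝ (Fin p)) g (q j) :=
    (hD.congr_of_eventuallyEq (main j)).mfderiv
  rw [hDh]
  exact hcrit j
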